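/- Let σ_{pq} denote the linear map on R^n that swaps the p-th and q-th coordinates (a reflection), and let c_{pq} ≥ 0 be weights for 1 ≤ p < q ≤ n. Let M = ∑_{p<q} c_{pq}(I − σ_{pq}). Then for each k, the coefficient μ_k = Tr(M^{∧k}) (so that char_M(t) = ∑_k (−1)^k μ_k t^{n−k}) equals ∑_{F} ∏_{(p,q) edge of F} c_{pq} · ∏_{i=1}^{n−k}(m_i + 1), where F ranges over all forests on vertex set {1,...,n} with k edges (hence n−k connected components) and m_i is the number of edges of the i-th component. In particular det M = 0. -/

import Mathlib

open Matrix SimpleGraph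
open scoped Classical

noncomputable section MF

variable {n : ℕ}

/-- smaller endpoint of an edge -/
def MFfst (e : Sym2 (Fin n)) : Fin n :=
  Sym2.lift ⟨fun a b => min a b, fun a b => min_comm a b⟩ e

/-- larger endpoint of an edge -/
def MFsnd (e : Sym2 (Fin n)) : Fin n :=
  Sym2.lift ⟨fun a b => max a b, fun a b => max_comm a b⟩ e

/-- signed incidence vector of an edge -/
def MFw (e : Sym2 (Fin n)) : Fin n → ℝ :=
  fun i => (if i = MFfst e then 1 else 0) - (if i = MFsnd e then 1 else 0)

@[simp] lemma MFfst_mk (a b : Fin n) : MFfst s(a, b) = min a b := rfl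
@[simp] lemma MFsnd_mk (a b : Fin n) : MFsnd s(a, b) = max a b := rfl

lemma MF_eq_mk (e : Sym2 (Fin n)) : e = s(MFfst e, MFsnd e) := by
  induction e using Sym2.inductionOn with
  | hf a b =>
    rcases le_total a b with h | h
    · simp [min_eq_left h, max_eq_right h]
    · simp only [MFfst_mk, MFsnd_mk, min_eq_right h, max_eq_left h]
      exact (Sym2.eq_swap)

lemma MFfst_mem (e : Sym2 (Fin n)) : MFfst e ∈ e := by
  induction e using Sym2.inductionOn with
  | hf a b =>
    rcases le_total a b with h | h
    · simp [min_eq_left h]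
    · simp [min_eq_right h]

lemma MFsnd_mem (e : Sym2 (Fin n)) : MFsnd e ∈ e := by
  induction e using Sym2.inductionOn with
  | hf a b =>
    rcases le_total a b with h | h
    · simp [max_eq_right h]
    · simp [max_eq_left h]

lemma MF_mem_iff {e : Sym2 (Fin n)} {i : Fin n} : i ∈ e ↔ i = MFfst e ∨ i = MFsnd e := by
  conv_lhs => rw [MF_eq_mk e]
  exact Sym2.mem_iff

lemma MF_isDiag_iff {e : Sym2 (Fin n)} : e.IsDiag ↔ MFfst e = MFsnd e := by
  induction e using Sym2.inductionOn with
  | hf a b =>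
    simp only [Sym2.isDiag_iff_proj_eq, MFfst_mk, MFsnd_mk]
    constructor
    · rintro rfl; simp
    · intro h
      rcases le_total a b with hh | hh
      · rw [min_eq_left hh, max_eq_right hh] at h; exact h
      · rw [min_eq_right hh, max_eq_left hh] at h; exact h.symm

lemma MFw_apply_not_mem {e : Sym2 (Fin n)} {i : Fin n} (h : i ∉ e) : MFw e i = 0 := by
  have h1 : i ≠ MFfst e := fun hh => h (hh ▸ MFfst_mem e)
  have h2 : i ≠ MFsnd e := fun hh => h (hh ▸ MFsnd_mem e)
  simp [MFw, h1, h2]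

lemma MFw_fst {e : Sym2 (Fin n)} (h : ¬ e.IsDiag) : MFw e (MFfst e) = 1 := by
  have : MFfst e ≠ MFsnd e := fun hh => h (MF_isDiag_iff.mpr hh)
  simp [MFw, this]

lemma MFw_snd {e : Sym2 (Fin n)} (h : ¬ e.IsDiag) : MFw e (MFsnd e) = -1 := by
  have : MFsnd e ≠ MFfst e := fun hh => h (MF_isDiag_iff.mpr hh.symm)
  simp [MFw, this]

lemma MFw_mem_sq {e : Sym2 (Fin n)} {u : Fin n} (h : ¬ e.IsDiag) (hu : u ∈ e) :
    MFw e u = 1 ∨ MFw e u = -1 := by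
  rcases MF_mem_iff.mp hu with rfl | rfl
  · exact Or.inl (MFw_fst h)
  · exact Or.inr (MFw_snd h)

/-- the set of potential edges -/
def MFES (n : ℕ) : Finset (Sym2 (Fin n)) := Finset.univ.filter (fun e => ¬ e.IsDiag)

/-- the graph of an edge finset -/
def MFG (T : Finset (Sym2 (Fin n))) : SimpleGraph (Fin n) :=
  SimpleGraph.fromEdgeSet (↑T : Set (Sym2 (Fin n)))

/-- the edge-side Gram determinant of the incidence matrix restricted to rows `s`, columns `T` -/
def MFgram (s : Finset (Fin n)) (T : Finset (Sym2 (Fin n))) : ℝ :=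
  Matrix.det (Matrix.of fun e f : ↥T => ∑ i : ↥s, MFw e.1 i.1 * MFw f.1 i.1)

/-- the nonzero-minor condition: every component misses exactly one vertex of `s` -/
def MFQ (s : Finset (Fin n)) (T : Finset (Sym2 (Fin n))) : Prop :=
  ∀ x : Fin n, ∃! y : Fin n, (MFG T).Reachable x y ∧ y ∉ s


lemma MFfst_le (e : Sym2 (Fin n)) : MFfst e ≤ MFsnd e := by
  induction e using Sym2.inductionOn with
  | hf a b => exact min_le_max

lemma MFfst_lt {e : Sym2 (Fin n)} (h : ¬ e.IsDiag) : MFfst e < MFsnd e :=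
  lt_of_le_of_ne (MFfst_le e) (fun hh => h (MF_isDiag_iff.mpr hh))

lemma MF_key (p q x y : Fin n) (h : p < q) :
    ((1 : Matrix (Fin n) (Fin n) ℝ)
        - Matrix.of fun i j => if j = Equiv.swap p q i then (1:ℝ) else 0) x y
      = MFw s(p,q) x * MFw s(p,q) y := by
  have hpq : p ≠ q := ne_of_lt h
  simp only [MFw, MFfst_mk, MFsnd_mk, min_eq_left h.le, max_eq_right h.le]
  simp only [Matrix.sub_apply, Matrix.one_apply, Matrix.of_apply, Equiv.swap_apply_def]
  by_cases hxp : x = p <;> by_cases hxq : x = q <;> by_cases hyp : y = p <;>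
      by_cases hyq : y = q <;>
    subst_vars <;> simp_all (config := {decide := false}) [eq_comm, Ne.symm] <;>
    first
      | ring
      | (intro hh; exact hpq hh.symm)
      | (intro hh; simp_all)

lemma MF_LAP {n : ℕ} (c : Fin n → Fin n → ℝ) (hsym : ∀ p q, c p q = c q p)
    (M : Matrix (Fin n) (Fin n) ℝ)
    (hM : M = ∑ p : Fin n, ∑ q : Fin n, if p < q then
        c p q • ((1 : Matrix (Fin n) (Fin n) ℝ)
          - Matrix.of fun i j => if j = Equiv.swap p q i then (1 : ℝ) else 0)
      else 0) (x y : Fin n) :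
    M x y = ∑ e ∈ MFES n, Sym2.lift ⟨c, hsym⟩ e * (MFw e x * MFw e y) := by
  subst hM
  have h1 : (∑ p : Fin n, ∑ q : Fin n, if p < q then
        c p q • ((1 : Matrix (Fin n) (Fin n) ℝ)
          - Matrix.of fun i j => if j = Equiv.swap p q i then (1 : ℝ) else 0)
      else 0) x y
      = ∑ p : Fin n, ∑ q : Fin n, if p < q then
          Sym2.lift ⟨c, hsym⟩ s(p,q) * (MFw s(p,q) x * MFw s(p,q) y) else 0 := by
    simp only [Matrix.sum_apply]
    refine Finset.sum_congr rfl fun p _ => Finset.sum_congr rfl fun q _ => ?_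
    rw [apply_ite (fun m : Matrix (Fin n) (Fin n) ℝ => m x y)]
    split_ifs with h
    · rw [Matrix.smul_apply, smul_eq_mul, MF_key p q x y h, Sym2.lift_mk]
    · rfl
  rw [h1, ← Finset.sum_product']
  rw [show (∑ z ∈ (Finset.univ : Finset (Fin n)) ×ˢ (Finset.univ : Finset (Fin n)),
      if z.1 < z.2 then Sym2.lift ⟨c, hsym⟩ s(z.1,z.2)
        * (MFw s(z.1,z.2) x * MFw s(z.1,z.2) y) else 0)
    = ∑ z ∈ (Finset.univ ×ˢ Finset.univ).filter (fun z : Fin n × Fin n => z.1 < z.2),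
        Sym2.lift ⟨c, hsym⟩ s(z.1,z.2) * (MFw s(z.1,z.2) x * MFw s(z.1,z.2) y)
    from (Finset.sum_filter _ _).symm]
  refine Finset.sum_nbij' (fun z => s(z.1, z.2)) (fun e => (MFfst e, MFsnd e))
    ?_ ?_ ?_ ?_ ?_
  · intro z hz
    simp only [Finset.mem_filter, Finset.mem_product] at hz
    simp [MFES, Sym2.isDiag_iff_proj_eq, ne_of_lt hz.2]
  · intro e he
    simp only [MFES, Finset.mem_filter] at he
    simp [MFfst_lt he.2]
  · intro z hz
    simp only [Finset.mem_filter, Finset.mem_product] at hz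
    obtain ⟨a, b⟩ := z
    simp only [] at hz
    simp [min_eq_left hz.2.le, max_eq_right hz.2.le]
  · intro e he
    exact (MF_eq_mk e).symm
  · intro z hz
    rfl

lemma MF_GSQ {s : Finset (Fin n)} {T : Finset (Sym2 (Fin n))} (ρ : ↥s ≃ ↥T) :
    MFgram s T = (Matrix.det (Matrix.of fun i j : ↥s => MFw (ρ j).1 i.1)) ^ 2 := by
  classical
  set C : Matrix ↥s ↥s ℝ := Matrix.of fun i j : ↥s => MFw (ρ j).1 i.1 with hC
  have h : (Matrix.of fun e f : ↥T => ∑ i : ↥s, MFw e.1 i.1 * MFw f.1 i.1)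
      = (Cᵀ * C).submatrix ρ.symm ρ.symm := by
    ext e f
    simp [hC, Matrix.mul_apply, Matrix.transpose_apply, Equiv.apply_symm_apply]
  rw [MFgram, h, Matrix.det_submatrix_equiv_self, Matrix.det_mul, Matrix.det_transpose, sq]

lemma MF_CB {n k : ℕ} (c : Fin n → Fin n → ℝ) (hsym : ∀ p q, c p q = c q p)
    (M : Matrix (Fin n) (Fin n) ℝ)
    (hM : ∀ x y, M x y = ∑ e ∈ MFES n, Sym2.lift ⟨c, hsym⟩ e * (MFw e x * MFw e y))
    (s : Finset (Fin n)) (hs : s.card = k) :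
    (M.submatrix (fun i : ↥s => (↑i : Fin n)) (fun i : ↥s => (↑i : Fin n))).det
      = ∑ T ∈ Finset.powersetCard k (MFES n),
          (∏ e ∈ T, Sym2.lift ⟨c, hsym⟩ e) * MFgram s T := by
  classical
  set cS : Sym2 (Fin n) → ℝ := Sym2.lift ⟨c, hsym⟩ with hcS
  set A : Matrix ↥s ↥s ℝ := M.submatrix (fun i : ↥s => (↑i : Fin n)) (fun i : ↥s => (↑i : Fin n))
    with hA
  have hrow : (A : ↥s → ↥s → ℝ)
      = fun i : ↥s => ∑ e ∈ MFES n, (cS e * MFw e i.1) • (fun j : ↥s => MFw e j.1) := by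
    funext i j
    rw [Finset.sum_apply]
    have : A i j = M i.1 j.1 := rfl
    rw [this, hM i.1 j.1]
    refine Finset.sum_congr rfl fun e _ => ?_
    simp [smul_eq_mul]; ring
  have expand : A.det = ∑ r ∈ Fintype.piFinset (fun _ : ↥s => MFES n),
      (∏ i : ↥s, (cS (r i) * MFw (r i) i.1))
        * Matrix.det (Matrix.of fun i j : ↥s => MFw (r i) j.1) := by
    have h0 : A.det = Matrix.detRowAlternating (A : ↥s → ↥s → ℝ) := rfl
    rw [h0, hrow]
    have h1 : Matrix.detRowAlternating
        (fun i : ↥s => ∑ e ∈ MFES n, (cS e * MFw e i.1) • (fun j : ↥s => MFw e j.1))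
        = ∑ r ∈ Fintype.piFinset (fun _ : ↥s => MFES n),
            Matrix.detRowAlternating
              (fun i : ↥s => (cS (r i) * MFw (r i) i.1) • (fun j : ↥s => MFw (r i) j.1)) :=
      (Matrix.detRowAlternating (R := ℝ) (n := ↥s)).toMultilinearMap.map_sum_finset
        (fun i e => (cS e * MFw e i.1) • (fun j : ↥s => MFw e j.1)) (fun _ => MFES n)
    rw [h1]
    refine Finset.sum_congr rfl fun r _ => ?_
    have h2 : Matrix.detRowAlternating
        (fun i : ↥s => (cS (r i) * MFw (r i) i.1) • (fun j : ↥s => MFw (r i) j.1))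
        = (∏ i : ↥s, (cS (r i) * MFw (r i) i.1))
            • Matrix.detRowAlternating (fun i : ↥s => (fun j : ↥s => MFw (r i) j.1)) :=
      (Matrix.detRowAlternating (R := ℝ) (n := ↥s)).toMultilinearMap.map_smul_univ _ _
    rw [h2, smul_eq_mul]
    rfl
  rw [expand]
  -- kill non-injective terms
  rw [← Finset.sum_filter_of_ne (p := fun r : ↥s → Sym2 (Fin n) => Function.Injective r)
    (by
      intro r _ hr
      by_contra hinj
      apply hr
      simp only [Function.Injective, not_forall] at hinj
      obtain ⟨i, j, hij, hne⟩ := hinj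
      have : Matrix.det (Matrix.of fun i j : ↥s => MFw (r i) j.1) = 0 := by
        apply Matrix.det_zero_of_row_eq hne
        funext l
        simp [hij]
      rw [this, mul_zero])]
  -- fiber over the image
  rw [← Finset.sum_fiberwise_of_maps_to (g := fun r : ↥s → Sym2 (Fin n) =>
      Finset.image r Finset.univ) (t := Finset.powersetCard k (MFES n))
    (by
      intro r hr
      simp only [Finset.mem_filter, Fintype.mem_piFinset] at hr
      rw [Finset.mem_powersetCard]
      constructor
      · intro e he
        obtain ⟨i, _, rfl⟩ := Finset.mem_image.mp he
        exact hr.1 i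
      · rw [Finset.card_image_of_injective _ hr.2, Finset.card_univ, Fintype.card_coe, hs])]
  refine Finset.sum_congr rfl fun T hT => ?_
  -- now a fixed T
  have hTcard : T.card = k := (Finset.mem_powersetCard.mp hT).2
  have hTsub : T ⊆ MFES n := (Finset.mem_powersetCard.mp hT).1
  have hcards : Fintype.card ↥s = Fintype.card ↥T := by
    rw [Fintype.card_coe, Fintype.card_coe, hs, hTcard]
  obtain ⟨ρ⟩ : Nonempty (↥s ≃ ↥T) := ⟨Fintype.equivOfCardEq hcards⟩
  set C : Matrix ↥s ↥s ℝ := Matrix.of fun i j : ↥s => MFw (ρ j).1 i.1 with hC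
  have hsum_bij : ∑ r ∈ ((Fintype.piFinset fun _ : ↥s => MFES n).filter
        (fun r => Function.Injective r)).filter
        (fun r => Finset.image r Finset.univ = T),
      (∏ i : ↥s, (cS (r i) * MFw (r i) i.1))
        * Matrix.det (Matrix.of fun i j : ↥s => MFw (r i) j.1)
    = ∑ σ : Equiv.Perm ↥s,
      (∏ i : ↥s, (cS ((ρ (σ i)).1) * MFw ((ρ (σ i)).1) i.1))
        * Matrix.det (Matrix.of fun i j : ↥s => MFw ((ρ (σ i)).1) j.1) := by
    have hinj' : ∀ σ : Equiv.Perm ↥s,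
        Function.Injective (fun i : ↥s => ((ρ (σ i)).1 : Sym2 (Fin n))) := by
      intro σ i j hij
      exact σ.injective (ρ.injective (Subtype.val_injective hij))
    refine (Finset.sum_bij (fun (σ : Equiv.Perm ↥s) _ =>
        (fun i : ↥s => ((ρ (σ i)).1 : Sym2 (Fin n)))) ?_ ?_ ?_ ?_).symm
    · intro σ _
      simp only [Finset.mem_filter, Fintype.mem_piFinset]
      refine ⟨⟨fun i => hTsub (ρ (σ i)).2, hinj' σ⟩, ?_⟩
      apply Finset.eq_of_subset_of_card_le
      · intro e he
        obtain ⟨i, _, rfl⟩ := Finset.mem_image.mp he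
        exact (ρ (σ i)).2
      · rw [Finset.card_image_of_injective _ (hinj' σ), Finset.card_univ, Fintype.card_coe,
          hs, hTcard]
    · intro σ1 _ σ2 _ h
      ext i
      have h1 : ((ρ (σ1 i)).1 : Sym2 (Fin n)) = (ρ (σ2 i)).1 := congrFun h i
      have h2 : ρ (σ1 i) = ρ (σ2 i) := Subtype.val_injective h1
      have h5 : σ1 i = σ2 i := ρ.injective h2
      rw [h5]
    · intro r hr
      simp only [Finset.mem_filter, Fintype.mem_piFinset] at hr
      obtain ⟨⟨hmem, hinj⟩, himg⟩ := hr
      have hri : ∀ i : ↥s, r i ∈ T := by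
        intro i
        rw [← himg]
        exact Finset.mem_image_of_mem r (Finset.mem_univ i)
      set σ0 : ↥s → ↥s := fun i => ρ.symm ⟨r i, hri i⟩ with hσ0
      have hinj0 : Function.Injective σ0 := by
        intro i j hij
        apply hinj
        have := ρ.symm.injective hij
        exact congrArg Subtype.val this
      refine ⟨Equiv.ofBijective σ0 (Finite.injective_iff_bijective.mp hinj0),
        Finset.mem_univ _, ?_⟩
      funext i
      show ((ρ (σ0 i)).1 : Sym2 (Fin n)) = r i
      rw [hσ0]
      simp
    · intro σ _
      rfl
  rw [hsum_bij]
  have hdc : Matrix.det Cᵀ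
      = ∑ σ : Equiv.Perm ↥s, ((Equiv.Perm.sign σ : ℤ) : ℝ) * ∏ i : ↥s, C i (σ i) := by
    rw [Matrix.det_apply]
    refine Finset.sum_congr rfl fun σ _ => ?_
    rw [Units.smul_def, zsmul_eq_mul]
    rfl
  have hterm : ∀ σ : Equiv.Perm ↥s,
      (∏ i : ↥s, (cS ((ρ (σ i)).1) * MFw ((ρ (σ i)).1) i.1))
        * Matrix.det (Matrix.of fun i j : ↥s => MFw ((ρ (σ i)).1) j.1)
      = (∏ e ∈ T, cS e)
          * (Matrix.det Cᵀ * (((Equiv.Perm.sign σ : ℤ) : ℝ) * ∏ i : ↥s, C i (σ i))) := by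
    intro σ
    have hps : (∏ i : ↥s, (cS ((ρ (σ i)).1) * MFw ((ρ (σ i)).1) i.1))
        = (∏ e ∈ T, cS e) * ∏ i : ↥s, C i (σ i) := by
      rw [Finset.prod_mul_distrib]
      refine congrArg₂ (· * ·) ?_ rfl
      rw [← Finset.prod_coe_sort T (fun e => cS e)]
      exact Equiv.prod_comp (σ.trans ρ) (fun t => cS t.1)
    have hdet : Matrix.det (Matrix.of fun i j : ↥s => MFw ((ρ (σ i)).1) j.1)
        = ((Equiv.Perm.sign σ : ℤ) : ℝ) * Matrix.det Cᵀ := by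
      have h3 := Matrix.det_permute σ Cᵀ
      have h4 : Cᵀ.submatrix (⇑σ) id = Matrix.of fun i j : ↥s => MFw ((ρ (σ i)).1) j.1 := rfl
      rw [h4] at h3
      rw [h3]
    rw [hps, hdet]
    ring
  rw [Finset.sum_congr rfl (fun σ _ => hterm σ), ← Finset.mul_sum, ← Finset.mul_sum, ← hdc,
    Matrix.det_transpose, MF_GSQ ρ, sq]

/-- characteristic vector -/
def MFchi (a : Fin n) : Fin n → ℝ := fun i => if i = a then 1 else 0

/-- sign of a dart -/
noncomputable def MFsgn {T : Finset (Sym2 (Fin n))} (d : (MFG T).Dart) : ℝ :=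
  if d.toProd.1 = MFfst d.edge then 1 else -1

lemma MFsgn_smul {T : Finset (Sym2 (Fin n))} (d : (MFG T).Dart) :
    MFsgn d • MFw d.edge = MFchi d.toProd.1 - MFchi d.toProd.2 := by
  have hne : d.toProd.1 ≠ d.toProd.2 := d.adj.ne
  have hedge : d.edge = s(d.toProd.1, d.toProd.2) := rfl
  set x := d.toProd.1
  set y := d.toProd.2
  rcases le_total x y with hxy | hxy
  · have hlt : x < y := lt_of_le_of_ne hxy hne
    have h1 : MFfst d.edge = x := by rw [hedge]; simp [min_eq_left hxy]
    have h2 : MFsnd d.edge = y := by rw [hedge]; simp [max_eq_right hxy]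
    rw [MFsgn, if_pos h1.symm]
    funext i
    simp [MFw, MFchi, h1, h2]
    try ring
  · have hlt : y < x := lt_of_le_of_ne hxy (Ne.symm hne)
    have h1 : MFfst d.edge = y := by rw [hedge]; simp [min_eq_right hxy]
    have h2 : MFsnd d.edge = x := by rw [hedge]; simp [max_eq_left hxy]
    rw [MFsgn, if_neg (by rw [h1]; exact hne)]
    funext i
    simp [MFw, MFchi, h1, h2]
    try ring

lemma MF_telescope {T : Finset (Sym2 (Fin n))} {a b : Fin n} (p : (MFG T).Walk a b) :
    (p.darts.map (fun d => MFsgn d • MFw d.edge)).sum = MFchi a - MFchi b := by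
  induction p with
  | nil => simp
  | cons h q ih =>
    rw [SimpleGraph.Walk.darts_cons, List.map_cons, List.sum_cons, ih, MFsgn_smul]
    abel

lemma MF_CYC {T : Finset (Sym2 (Fin n))} (hT : ¬ (MFG T).IsAcyclic)
    (s : Finset (Fin n)) : MFgram s T = 0 := by
  classical
  simp only [SimpleGraph.IsAcyclic, not_forall, not_not] at hT
  obtain ⟨v, p, hp⟩ := hT
  -- the darts as a finset
  have hnodupE : p.edges.Nodup := hp.edges_nodup
  have hnodupD : p.darts.Nodup := by
    have := hnodupE
    rw [SimpleGraph.Walk.edges] at this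
    exact this.of_map _
  -- the map from darts to edge-subtypes
  have hdartmem : ∀ d : (MFG T).Dart, d.edge ∈ T := by
    intro d
    have h1 : d.edge ∈ (SimpleGraph.fromEdgeSet (↑T : Set (Sym2 (Fin n)))).edgeSet :=
      d.edge_mem
    rw [SimpleGraph.edgeSet_fromEdgeSet] at h1
    exact h1.1
  set dE : (MFG T).Dart → ↥T := fun d => ⟨d.edge, hdartmem d⟩ with hdE
  set g : ↥T → ℝ := fun e => ∑ d ∈ p.darts.toFinset.filter (fun d => dE d = e), MFsgn d
    with hg
  -- key1 : the columns combination vanishes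
  have key1 : ∑ e : ↥T, g e • MFw e.1 = 0 := by
    have h2 : ∀ e : ↥T, g e • MFw e.1
        = ∑ d ∈ p.darts.toFinset.filter (fun d => dE d = e), MFsgn d • MFw d.edge := by
      intro e
      rw [hg, Finset.sum_smul]
      refine Finset.sum_congr rfl fun d hd => ?_
      have : dE d = e := (Finset.mem_filter.mp hd).2
      rw [← this]
    rw [Finset.sum_congr rfl (fun e _ => h2 e)]
    rw [Finset.sum_fiberwise_of_maps_to (fun d _ => Finset.mem_univ (dE d))]
    have h3 : ∑ d ∈ p.darts.toFinset, MFsgn d • MFw d.edge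
        = (p.darts.map (fun d => MFsgn d • MFw d.edge)).sum := by
      rw [List.sum_toFinset _ hnodupD]
    rw [h3, MF_telescope p, sub_self]
  -- key2 : g is nonzero
  have hdne : p.darts ≠ [] := by
    have h3 := hp.three_le_length
    intro hnil
    have : p.length = 0 := by
      rw [← SimpleGraph.Walk.length_darts, hnil]
      rfl
    omega
  obtain ⟨d0, hd0⟩ := List.exists_mem_of_ne_nil p.darts hdne
  have hfilter : p.darts.toFinset.filter (fun d => dE d = dE d0) = {d0} := by
    ext d
    simp only [Finset.mem_filter, List.mem_toFinset, Finset.mem_singleton]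
    constructor
    · rintro ⟨hd, hde⟩
      have hedge : d.edge = d0.edge := congrArg Subtype.val hde
      have hnodupM : (p.darts.map SimpleGraph.Dart.edge).Nodup := hnodupE
      exact List.inj_on_of_nodup_map hnodupM hd hd0 hedge
    · rintro rfl
      exact ⟨hd0, rfl⟩
  have key2 : g ≠ 0 := by
    intro h0
    have : g (dE d0) = 0 := congrFun h0 _
    rw [hg] at this
    simp only [hfilter, Finset.sum_singleton] at this
    rw [MFsgn] at this
    split_ifs at this <;> norm_num at this
  -- conclude
  rw [MFgram, ← Matrix.exists_mulVec_eq_zero_iff]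
  refine ⟨g, key2, ?_⟩
  funext e
  rw [Matrix.mulVec, dotProduct]
  have h4 : ∀ f : ↥T, (Matrix.of fun e f : ↥T => ∑ i : ↥s, MFw e.1 i.1 * MFw f.1 i.1) e f * g f
      = ∑ i : ↥s, MFw e.1 i.1 * (g f * MFw f.1 i.1) := by
    intro f
    rw [Matrix.of_apply, Finset.sum_mul]
    refine Finset.sum_congr rfl fun i _ => ?_
    ring
  rw [Finset.sum_congr rfl (fun f _ => h4 f), Finset.sum_comm]
  have h5 : ∀ i : ↥s, ∑ f : ↥T, MFw e.1 i.1 * (g f * MFw f.1 i.1) = 0 := by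
    intro i
    rw [← Finset.mul_sum]
    have h6 : ∑ f : ↥T, g f * MFw f.1 i.1 = 0 := by
      have := congrFun key1 i.1
      rw [Finset.sum_apply] at this
      simpa using this
    rw [h6, mul_zero]
  rw [Finset.sum_congr rfl (fun i _ => h5 i), Finset.sum_const_zero]
  rfl

lemma MF_adj {T : Finset (Sym2 (Fin n))} {x y : Fin n} :
    (MFG T).Adj x y ↔ s(x, y) ∈ T ∧ x ≠ y := by
  rw [show MFG T = SimpleGraph.fromEdgeSet (↑T : Set (Sym2 (Fin n))) from rfl,
    SimpleGraph.fromEdgeSet_adj, Finset.mem_coe]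

lemma MF_leaf {T : Finset (Sym2 (Fin n))} (hTE : T ⊆ MFES n)
    (hac : (MFG T).IsAcyclic) (hne : T.Nonempty) :
    ∃ u v : Fin n, u ≠ v ∧ s(u, v) ∈ T ∧ ∀ e ∈ T, v ∈ e → e = s(u, v) := by
  classical
  obtain ⟨e0, he0⟩ := hne
  have hnd0 : ¬ e0.IsDiag := by
    have := hTE he0
    simp only [MFES, Finset.mem_filter] at this
    exact this.2
  have hab : MFfst e0 ≠ MFsnd e0 := fun h => hnd0 (MF_isDiag_iff.mpr h)
  have hadj0 : (MFG T).Adj (MFfst e0) (MFsnd e0) := by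
    rw [MF_adj]
    exact ⟨by rw [← MF_eq_mk]; exact he0, hab⟩
  set P : ℕ → Prop := fun l => ∃ (x y : Fin n) (p : (MFG T).Walk x y), p.IsPath ∧ p.length = l
    with hP
  have hP1 : P 1 := by
    refine ⟨MFfst e0, MFsnd e0, SimpleGraph.Walk.cons hadj0 SimpleGraph.Walk.nil, ?_, rfl⟩
    rw [SimpleGraph.Walk.isPath_def]
    simp [hab]
  have hbound : ∀ l, P l → l ≤ n := by
    rintro l ⟨x, y, p, hp, rfl⟩
    have := hp.length_lt
    rw [Fintype.card_fin] at this
    omega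
  have h1n : 1 ≤ n := hbound 1 hP1
  set lmax := Nat.findGreatest P n with hlmax
  have hPmax : P lmax := Nat.findGreatest_spec h1n hP1
  have hge1 : 1 ≤ lmax := Nat.le_findGreatest h1n hP1
  obtain ⟨x, y, p, hp, hlen⟩ := hPmax
  -- reverse to put the endpoint first
  set q : (MFG T).Walk y x := p.reverse with hq
  have hqpath : q.IsPath := hp.reverse
  have hqlen : q.length = lmax := by rw [hq, SimpleGraph.Walk.length_reverse, hlen]
  cases hq2 : q with
  | nil =>
    rw [hq2] at hqlen
    simp at hqlen
    omega
  | @cons _ z _ h q' =>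
    rw [hq2] at hqpath
    have hq'path : q'.IsPath := hqpath.of_cons
    have hynq' : y ∉ q'.support := (SimpleGraph.Walk.cons_isPath_iff h q').mp hqpath |>.2
    refine ⟨z, y, (MF_adj.mp h).2.symm, ?_, ?_⟩
    · have := (MF_adj.mp h).1
      rwa [Sym2.eq_swap] at this
    · intro e heT hye
      -- the other endpoint of e
      set z' := (Sym2.Mem.other hye) with hz'
      have hez' : s(y, z') = e := Sym2.other_spec hye
      have hnd : ¬ e.IsDiag := by
        have := hTE heT
        simp only [MFES, Finset.mem_filter] at this
        exact this.2
      have hyz' : y ≠ z' := by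
        intro hh
        apply hnd
        rw [← hez']
        exact Sym2.mk_isDiag_iff.mpr hh
      have hadj' : (MFG T).Adj z' y := by
        rw [MF_adj]
        constructor
        · rw [Sym2.eq_swap, hez']; exact heT
        · exact hyz'.symm
      by_cases hzz : z' = z
      · rw [← hez', hzz, Sym2.eq_swap]
      exfalso
      by_cases hmem : z' ∈ q.support
      · -- build a cycle
        rw [hq2] at hmem
        rw [SimpleGraph.Walk.support_cons, List.mem_cons] at hmem
        rcases hmem with hmem | hmem
        · exact hyz' hmem.symm
        · set r := q'.takeUntil z' hmem with hr
          have hrpath : r.IsPath := hq'path.takeUntil hmem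
          have hcons : ((SimpleGraph.Walk.cons h r) : (MFG T).Walk y z').IsPath := by
            rw [SimpleGraph.Walk.cons_isPath_iff]
            refine ⟨hrpath, ?_⟩
            intro hy
            exact hynq' (SimpleGraph.Walk.support_takeUntil_subset q' hmem hy)
          have hcyc : (SimpleGraph.Walk.cons hadj' (SimpleGraph.Walk.cons h r)).IsCycle := by
            rw [SimpleGraph.Walk.cons_isCycle_iff]
            refine ⟨hcons, ?_⟩
            rw [SimpleGraph.Walk.edges_cons, List.mem_cons]
            push_neg
            constructor
            · intro hh
              rw [Sym2.eq_swap] at hh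
              exact hzz ((Sym2.congr_right).mp hh)
            · intro hh
              rw [Sym2.eq_swap] at hh
              have hy2 : y ∈ r.support :=
                SimpleGraph.Walk.fst_mem_support_of_mem_edges r hh
              exact hynq' (SimpleGraph.Walk.support_takeUntil_subset q' hmem hy2)
          exact hac _ hcyc
      · -- extend the path
        have hext : ((SimpleGraph.Walk.cons hadj' q) : (MFG T).Walk z' x).IsPath := by
          rw [SimpleGraph.Walk.cons_isPath_iff]
          exact ⟨hq2 ▸ hqpath, hmem⟩
        have hPl : P (lmax + 1) := ⟨z', x, SimpleGraph.Walk.cons hadj' q, hext, by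
          rw [SimpleGraph.Walk.length_cons, hqlen]⟩
        have hle : lmax + 1 ≤ n := hbound _ hPl
        exact Nat.findGreatest_is_greatest (by omega) hle hPl


/-- split a finset coercion at an element -/
def MFsplit {α : Type*} [DecidableEq α] (s : Finset α) (v : α) (hv : v ∈ s) :
    (Unit ⊕ ↥(s.erase v)) ≃ ↥s where
  toFun := fun x => match x with
    | Sum.inl _ => ⟨v, hv⟩
    | Sum.inr y => ⟨y.1, Finset.mem_of_mem_erase y.2⟩
  invFun := fun x => if h : x.1 = v then Sum.inl () else
    Sum.inr ⟨x.1, Finset.mem_erase.mpr ⟨h, x.2⟩⟩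
  left_inv := by
    rintro (⟨⟩ | y)
    · simp
    · have h : (y : α) ≠ v := (Finset.mem_erase.mp y.2).1
      simp [h]
  right_inv := by
    rintro ⟨x, hx⟩
    by_cases h : x = v
    · subst h; simp
    · simp [h]

lemma MF_nondiag {T : Finset (Sym2 (Fin n))} (hTE : T ⊆ MFES n) {e : Sym2 (Fin n)}
    (he : e ∈ T) : ¬ e.IsDiag := by
  have := hTE he
  simp only [MFES, Finset.mem_filter] at this
  exact this.2

lemma MF_E1 {T : Finset (Sym2 (Fin n))} {s : Finset (Fin n)} {u v : Fin n}
    (hTE : T ⊆ MFES n) (huv : u ≠ v) (he0 : s(u, v) ∈ T)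
    (hleaf : ∀ e ∈ T, v ∈ e → e = s(u, v)) (hvs : v ∈ s)
    (hcard : s.card = T.card) :
    MFgram s T = MFgram (s.erase v) (T.erase s(u, v)) := by
  classical
  have hcard' : (s.erase v).card = (T.erase s(u, v)).card := by
    rw [Finset.card_erase_of_mem hvs, Finset.card_erase_of_mem he0, hcard]
  obtain ⟨ρ'⟩ : Nonempty (↥(s.erase v) ≃ ↥(T.erase s(u, v))) :=
    ⟨Fintype.equivOfCardEq (by rw [Fintype.card_coe, Fintype.card_coe, hcard'])⟩
  set es := MFsplit s v hvs with hes
  set eT := MFsplit T s(u, v) he0 with heT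
  set ρ : ↥s ≃ ↥T := es.symm.trans ((Equiv.sumCongr (Equiv.refl Unit) ρ').trans eT) with hρ
  rw [MF_GSQ ρ, MF_GSQ ρ']
  have hdet : Matrix.det (Matrix.of fun i j : ↥s => MFw (ρ j).1 i.1)
      = MFw s(u, v) v * Matrix.det (Matrix.of fun i j : ↥(s.erase v) => MFw (ρ' j).1 i.1) := by
    rw [← Matrix.det_submatrix_equiv_self es
      (Matrix.of fun i j : ↥s => MFw (ρ j).1 i.1)]
    have hB : (Matrix.of fun i j : ↥s => MFw (ρ j).1 i.1).submatrix es es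
        = Matrix.fromBlocks
            (Matrix.of fun _ _ : Unit => MFw s(u, v) v)
            0
            (Matrix.of fun (i : ↥(s.erase v)) (_ : Unit) => MFw s(u, v) i.1)
            (Matrix.of fun i j : ↥(s.erase v) => MFw (ρ' j).1 i.1) := by
      ext a b
      cases a with
      | inl a =>
        cases b with
        | inl b =>
          simp only [Matrix.submatrix_apply, Matrix.fromBlocks_apply₁₁]
          have h1 : (es (Sum.inl a)).1 = v := rfl
          have h2 : (ρ (es (Sum.inl b))).1 = s(u, v) := by
            rw [hρ]
            simp only [Equiv.trans_apply, Equiv.symm_apply_apply]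
            rfl
          rw [Matrix.of_apply, Matrix.of_apply, h1, h2]
        | inr b =>
          simp only [Matrix.submatrix_apply, Matrix.fromBlocks_apply₁₂]
          have h1 : (es (Sum.inl a)).1 = v := rfl
          have h2 : (ρ (es (Sum.inr b))).1 = (ρ' b).1 := by
            rw [hρ]
            simp only [Equiv.trans_apply, Equiv.symm_apply_apply]
            rfl
          rw [Matrix.of_apply, h1, h2, Matrix.zero_apply]
          apply MFw_apply_not_mem
          intro hmem
          have h3 := hleaf (ρ' b).1 (Finset.mem_of_mem_erase (ρ' b).2) hmem
          exact (Finset.mem_erase.mp (ρ' b).2).1 h3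
      | inr a =>
        cases b with
        | inl b =>
          simp only [Matrix.submatrix_apply, Matrix.fromBlocks_apply₂₁]
          have h2 : (ρ (es (Sum.inl b))).1 = s(u, v) := by
            rw [hρ]
            simp only [Equiv.trans_apply, Equiv.symm_apply_apply]
            rfl
          rw [Matrix.of_apply, Matrix.of_apply, h2]
          rfl
        | inr b =>
          simp only [Matrix.submatrix_apply, Matrix.fromBlocks_apply₂₂]
          have h2 : (ρ (es (Sum.inr b))).1 = (ρ' b).1 := by
            rw [hρ]
            simp only [Equiv.trans_apply, Equiv.symm_apply_apply]
            rfl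
          rw [Matrix.of_apply, Matrix.of_apply, h2]
          rfl
    rw [hB, Matrix.det_fromBlocks_zero₁₂, Matrix.det_unique]
    rfl
  rw [hdet, mul_pow]
  have hsq : MFw s(u, v) v ^ 2 = 1 := by
    rcases MFw_mem_sq (MF_nondiag hTE he0) (Sym2.mem_mk_right u v) with h | h <;>
      rw [h] <;> norm_num
  rw [hsq, one_mul]

lemma MF_E2 {T : Finset (Sym2 (Fin n))} {s : Finset (Fin n)} {u v : Fin n}
    (hTE : T ⊆ MFES n) (huv : u ≠ v) (he0 : s(u, v) ∈ T)
    (hvs : v ∉ s) (hus : u ∈ s)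
    (hcard : s.card = T.card) :
    MFgram s T = MFgram (s.erase u) (T.erase s(u, v)) := by
  classical
  have hcard' : (s.erase u).card = (T.erase s(u, v)).card := by
    rw [Finset.card_erase_of_mem hus, Finset.card_erase_of_mem he0, hcard]
  obtain ⟨ρ'⟩ : Nonempty (↥(s.erase u) ≃ ↥(T.erase s(u, v))) :=
    ⟨Fintype.equivOfCardEq (by rw [Fintype.card_coe, Fintype.card_coe, hcard'])⟩
  set es := MFsplit s u hus with hes
  set eT := MFsplit T s(u, v) he0 with heT
  set ρ : ↥s ≃ ↥T := es.symm.trans ((Equiv.sumCongr (Equiv.refl Unit) ρ').trans eT) with hρ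
  rw [MF_GSQ ρ, MF_GSQ ρ']
  have hdet : Matrix.det (Matrix.of fun i j : ↥s => MFw (ρ j).1 i.1)
      = MFw s(u, v) u * Matrix.det (Matrix.of fun i j : ↥(s.erase u) => MFw (ρ' j).1 i.1) := by
    rw [← Matrix.det_submatrix_equiv_self es
      (Matrix.of fun i j : ↥s => MFw (ρ j).1 i.1)]
    have hB : (Matrix.of fun i j : ↥s => MFw (ρ j).1 i.1).submatrix es es
        = Matrix.fromBlocks
            (Matrix.of fun _ _ : Unit => MFw s(u, v) u)
            (Matrix.of fun (_ : Unit) (j : ↥(s.erase u)) => MFw (ρ' j).1 u)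
            0
            (Matrix.of fun i j : ↥(s.erase u) => MFw (ρ' j).1 i.1) := by
      ext a b
      cases a with
      | inl a =>
        cases b with
        | inl b =>
          simp only [Matrix.submatrix_apply, Matrix.fromBlocks_apply₁₁]
          have h2 : (ρ (es (Sum.inl b))).1 = s(u, v) := by
            rw [hρ]; simp only [Equiv.trans_apply, Equiv.symm_apply_apply]; rfl
          rw [Matrix.of_apply, Matrix.of_apply, h2]
          rfl
        | inr b =>
          simp only [Matrix.submatrix_apply, Matrix.fromBlocks_apply₁₂]
          have h2 : (ρ (es (Sum.inr b))).1 = (ρ' b).1 := by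
            rw [hρ]; simp only [Equiv.trans_apply, Equiv.symm_apply_apply]; rfl
          rw [Matrix.of_apply, Matrix.of_apply, h2]
          rfl
      | inr a =>
        cases b with
        | inl b =>
          simp only [Matrix.submatrix_apply, Matrix.fromBlocks_apply₂₁]
          have h2 : (ρ (es (Sum.inl b))).1 = s(u, v) := by
            rw [hρ]; simp only [Equiv.trans_apply, Equiv.symm_apply_apply]; rfl
          rw [Matrix.of_apply, h2, Matrix.zero_apply]
          apply MFw_apply_not_mem
          have ha1 : (a.1 : Fin n) ≠ u := (Finset.mem_erase.mp a.2).1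
          have ha2 : (a.1 : Fin n) ≠ v := by
            intro hh
            exact hvs (hh ▸ Finset.mem_of_mem_erase a.2)
          intro hmem
          rcases Sym2.mem_iff.mp hmem with h | h
          · exact ha1 h
          · exact ha2 h
        | inr b =>
          simp only [Matrix.submatrix_apply, Matrix.fromBlocks_apply₂₂]
          have h2 : (ρ (es (Sum.inr b))).1 = (ρ' b).1 := by
            rw [hρ]; simp only [Equiv.trans_apply, Equiv.symm_apply_apply]; rfl
          rw [Matrix.of_apply, Matrix.of_apply, h2]
          rfl
    rw [hB, Matrix.det_fromBlocks_zero₂₁, Matrix.det_unique]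
    rfl
  rw [hdet, mul_pow]
  have hsq : MFw s(u, v) u ^ 2 = 1 := by
    rcases MFw_mem_sq (MF_nondiag hTE he0) (Sym2.mem_mk_left u v) with h | h <;>
      rw [h] <;> norm_num
  rw [hsq, one_mul]

lemma MF_E3 {T : Finset (Sym2 (Fin n))} {s : Finset (Fin n)} {u v : Fin n}
    (he0 : s(u, v) ∈ T) (hvs : v ∉ s) (hus : u ∉ s)
    (hcard : s.card = T.card) :
    MFgram s T = 0 := by
  classical
  obtain ⟨ρ⟩ : Nonempty (↥s ≃ ↥T) :=
    ⟨Fintype.equivOfCardEq (by rw [Fintype.card_coe, Fintype.card_coe, hcard])⟩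
  rw [MF_GSQ ρ]
  have hz : Matrix.det (Matrix.of fun i j : ↥s => MFw (ρ j).1 i.1) = 0 := by
    apply Matrix.det_eq_zero_of_column_eq_zero (ρ.symm ⟨s(u, v), he0⟩)
    intro i
    rw [Matrix.of_apply, Equiv.apply_symm_apply]
    apply MFw_apply_not_mem
    intro hmem
    rcases Sym2.mem_iff.mp hmem with h | h
    · exact hus (h ▸ i.2)
    · exact hvs (h ▸ i.2)
  rw [hz]
  norm_num


section Reach

variable {T : Finset (Sym2 (Fin n))} {u v : Fin n}

/-- v is isolated after removing its unique edge -/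
lemma MF_isolated {G : SimpleGraph (Fin n)} {a y : Fin n} (h : ∀ z, ¬ G.Adj a z)
    (hr : G.Reachable a y) : y = a := by
  obtain ⟨w⟩ := hr
  match w with
  | SimpleGraph.Walk.nil => rfl
  | SimpleGraph.Walk.cons hadj p => exact absurd hadj (h _)

lemma MF_R1 (hleaf : ∀ e ∈ T, v ∈ e → e = s(u, v)) (y : Fin n) :
    (MFG (T.erase s(u, v))).Reachable v y ↔ y = v := by
  constructor
  · intro h
    refine MF_isolated ?_ h
    intro z hadj
    rw [MF_adj] at hadj
    have h1 := Finset.mem_erase.mp hadj.1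
    have h2 := hleaf _ h1.2 (Sym2.mem_mk_left v z)
    exact h1.1 h2
  · rintro rfl
    exact SimpleGraph.Reachable.refl _

lemma MF_mono {T1 T2 : Finset (Sym2 (Fin n))} (h : T1 ⊆ T2) : MFG T1 ≤ MFG T2 :=
  SimpleGraph.fromEdgeSet_mono (by exact_mod_cast h)

/-- first edge of a non-trivial walk contains the start -/
lemma MF_first_edge {G : SimpleGraph (Fin n)} {a b : Fin n} (p : G.Walk a b) (hab : a ≠ b) :
    ∃ e ∈ p.edges, a ∈ e := by
  cases p with
  | nil => exact absurd rfl hab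
  | @cons _ z _ h q =>
    exact ⟨s(a, z), by simp, Sym2.mem_mk_left a z⟩

/-- reachability transfer when both endpoints differ from the leaf -/
lemma MF_R2 (hTE : T ⊆ MFES n) (huv : u ≠ v) (he0 : s(u, v) ∈ T)
    (hleaf : ∀ e ∈ T, v ∈ e → e = s(u, v)) {x y : Fin n} (hx : x ≠ v) (hy : y ≠ v) :
    (MFG (T.erase s(u, v))).Reachable x y ↔ (MFG T).Reachable x y := by
  constructor
  · intro h
    exact h.mono (MF_mono (Finset.erase_subset _ _))
  · intro h
    obtain ⟨p0⟩ := h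
    set p : (MFG T).Walk x y := (p0.toPath : (MFG T).Walk x y) with hp
    have hpath : p.IsPath := p0.toPath.2
    have hvp : v ∉ p.support := by
      intro hv
      have hspec := SimpleGraph.Walk.take_spec p hv
      set t1 := p.takeUntil v hv with ht1
      set t2 := p.dropUntil v hv with ht2
      obtain ⟨e1, he1, hve1⟩ : ∃ e ∈ t1.edges, v ∈ e := by
        have h5 := MF_first_edge t1.reverse (Ne.symm hx)
        simpa only [SimpleGraph.Walk.edges_reverse, List.mem_reverse] using h5
      obtain ⟨e2, he2, hve2⟩ : ∃ e ∈ t2.edges, v ∈ e := MF_first_edge t2 (Ne.symm hy)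
      have hT1 : e1 ∈ T := by
        have h6 := SimpleGraph.Walk.edges_subset_edgeSet p
          (SimpleGraph.Walk.edges_takeUntil_subset p hv he1)
        rw [show (MFG T).edgeSet = ↑T \ {e | e.IsDiag}
          from SimpleGraph.edgeSet_fromEdgeSet _] at h6
        exact h6.1
      have hT2 : e2 ∈ T := by
        have h6 := SimpleGraph.Walk.edges_subset_edgeSet p
          (SimpleGraph.Walk.edges_dropUntil_subset p hv he2)
        rw [show (MFG T).edgeSet = ↑T \ {e | e.IsDiag}
          from SimpleGraph.edgeSet_fromEdgeSet _] at h6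
        exact h6.1
      have heq1 : e1 = s(u, v) := hleaf _ hT1 hve1
      have heq2 : e2 = s(u, v) := hleaf _ hT2 hve2
      have hnodup : (t1.append t2).edges.Nodup := by
        rw [hspec]
        exact hpath.isTrail.edges_nodup
      rw [SimpleGraph.Walk.edges_append] at hnodup
      have hdisj := List.disjoint_of_nodup_append hnodup
      exact hdisj (heq1 ▸ he1) (heq2 ▸ he2)
    -- transfer the path
    have hedges : ∀ e ∈ p.edges, e ∈ (MFG (T.erase s(u, v))).edgeSet := by
      intro e he
      have heT : e ∈ T := by
        have h6 : e ∈ (MFG T).edgeSet := SimpleGraph.Walk.edges_subset_edgeSet p he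
        have h7 : (MFG T).edgeSet = ↑T \ {e | e.IsDiag} := SimpleGraph.edgeSet_fromEdgeSet _
        rw [h7] at h6
        exact h6.1
      have hne0 : e ≠ s(u, v) := by
        intro hh
        apply hvp
        subst hh
        exact SimpleGraph.Walk.snd_mem_support_of_mem_edges p he
      rw [show MFG (T.erase s(u, v))
          = SimpleGraph.fromEdgeSet (↑(T.erase s(u, v)) : Set (Sym2 (Fin n))) from rfl,
        SimpleGraph.edgeSet_fromEdgeSet]
      refine ⟨Finset.mem_coe.mpr (Finset.mem_erase.mpr ⟨hne0, heT⟩), ?_⟩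
      exact MF_nondiag hTE heT
    exact ⟨p.transfer _ hedges⟩





lemma MF_step {G : SimpleGraph (Fin n)} {a y : Fin n} (hr : G.Reachable a y) :
    y = a ∨ ∃ z, G.Adj a z ∧ G.Reachable z y := by
  obtain ⟨w⟩ := hr
  match w with
  | SimpleGraph.Walk.nil => exact Or.inl rfl
  | SimpleGraph.Walk.cons hadj q => exact Or.inr ⟨_, hadj, ⟨q⟩⟩

lemma MF_RG (huv : u ≠ v) (he0 : s(u, v) ∈ T) : (MFG T).Reachable u v :=
  SimpleGraph.Adj.reachable (by rw [MF_adj]; exact ⟨he0, huv⟩)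

lemma MF_R3 (huv : u ≠ v) (he0 : s(u, v) ∈ T)
    (hleaf : ∀ e ∈ T, v ∈ e → e = s(u, v)) (y : Fin n) :
    (MFG T).Reachable v y ↔ y = v ∨ (MFG T).Reachable u y := by
  constructor
  · intro h
    rcases MF_step h with h1 | ⟨z, hadj, hr⟩
    · exact Or.inl h1
    · right
      rw [MF_adj] at hadj
      have h2 := hleaf _ hadj.1 (Sym2.mem_mk_left v z)
      rcases Sym2.eq_iff.mp h2 with ⟨h3, h4⟩ | ⟨h3, h4⟩
      · exact absurd h3.symm huv
      · exact h4 ▸ hr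
  · rintro (rfl | h)
    · exact SimpleGraph.Reachable.refl _
    · exact (MF_RG huv he0).symm.trans h

lemma MF_QE1 {s : Finset (Fin n)}
    (hTE : T ⊆ MFES n) (huv : u ≠ v) (he0 : s(u, v) ∈ T)
    (hleaf : ∀ e ∈ T, v ∈ e → e = s(u, v)) (hvs : v ∈ s) :
    MFQ s T ↔ MFQ (s.erase v) (T.erase s(u, v)) := by
  have hR1 : ∀ y, (MFG (T.erase s(u, v))).Reachable v y ↔ y = v := MF_R1 hleaf
  have hR2 : ∀ x y : Fin n, x ≠ v → y ≠ v →
      ((MFG (T.erase s(u, v))).Reachable x y ↔ (MFG T).Reachable x y) :=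
    fun x y hx hy => MF_R2 hTE huv he0 hleaf hx hy
  have hRG : (MFG T).Reachable u v := MF_RG huv he0
  constructor
  · intro hQ x
    by_cases hx : x = v
    · subst hx
      refine ⟨x, ⟨SimpleGraph.Reachable.refl _, Finset.notMem_erase _ _⟩, ?_⟩
      rintro y' ⟨hr', _⟩
      exact (hR1 y').mp hr'
    · obtain ⟨y, ⟨hyr, hys⟩, hyu⟩ := hQ x
      have hyv : y ≠ v := fun hh => (hh ▸ hys) hvs
      refine ⟨y, ⟨(hR2 x y hx hyv).mpr hyr,
        fun hh => hys (Finset.mem_of_mem_erase hh)⟩, ?_⟩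
      rintro y' ⟨hr', hs'⟩
      have hy'v : y' ≠ v := by
        intro hh
        subst hh
        exact hx ((hR1 x).mp hr'.symm)
      apply hyu
      exact ⟨(hR2 x y' hx hy'v).mp hr',
        fun hmem => hs' (Finset.mem_erase.mpr ⟨hy'v, hmem⟩)⟩
  · intro hQ x
    by_cases hxv : (MFG T).Reachable x v
    · obtain ⟨y₀, ⟨h0r, h0s⟩, h0u⟩ := hQ u
      have h0v : y₀ ≠ v := by
        intro hh
        subst hh
        exact huv ((hR1 u).mp h0r.symm)
      have hxu : (MFG T).Reachable x u := hxv.trans hRG.symm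
      refine ⟨y₀, ⟨hxu.trans ((hR2 u y₀ huv h0v).mp h0r),
        fun hmem => h0s (Finset.mem_erase.mpr ⟨h0v, hmem⟩)⟩, ?_⟩
      rintro y' ⟨hr', hs'⟩
      have hy'v : y' ≠ v := fun hh => (hh ▸ hs') hvs
      apply h0u
      exact ⟨(hR2 u y' huv hy'v).mpr (hxu.symm.trans hr'),
        fun hh => hs' (Finset.mem_of_mem_erase hh)⟩
    · have hx : x ≠ v := fun hh => hxv (hh ▸ SimpleGraph.Reachable.refl x)
      obtain ⟨y₀, ⟨h0r, h0s⟩, h0u⟩ := hQ x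
      have h0v : y₀ ≠ v := by
        intro hh
        subst hh
        exact hx ((hR1 x).mp h0r.symm)
      refine ⟨y₀, ⟨(hR2 x y₀ hx h0v).mp h0r,
        fun hmem => h0s (Finset.mem_erase.mpr ⟨h0v, hmem⟩)⟩, ?_⟩
      rintro y' ⟨hr', hs'⟩
      have hy'v : y' ≠ v := fun hh => hxv (hh ▸ hr')
      apply h0u
      exact ⟨(hR2 x y' hx hy'v).mpr hr',
        fun hh => hs' (Finset.mem_of_mem_erase hh)⟩

lemma MF_QE2 {s : Finset (Fin n)}
    (hTE : T ⊆ MFES n) (huv : u ≠ v) (he0 : s(u, v) ∈ T)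
    (hleaf : ∀ e ∈ T, v ∈ e → e = s(u, v)) (hvs : v ∉ s) (hus : u ∈ s) :
    MFQ s T ↔ MFQ (s.erase u) (T.erase s(u, v)) := by
  have hR1 : ∀ y, (MFG (T.erase s(u, v))).Reachable v y ↔ y = v := MF_R1 hleaf
  have hR2 : ∀ x y : Fin n, x ≠ v → y ≠ v →
      ((MFG (T.erase s(u, v))).Reachable x y ↔ (MFG T).Reachable x y) :=
    fun x y hx hy => MF_R2 hTE huv he0 hleaf hx hy
  have hRG : (MFG T).Reachable u v := MF_RG huv he0
  constructor
  · intro hQ x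
    by_cases hx : x = v
    · subst hx
      refine ⟨x, ⟨SimpleGraph.Reachable.refl _, fun hh => hvs (Finset.mem_of_mem_erase hh)⟩, ?_⟩
      rintro y' ⟨hr', _⟩
      exact (hR1 y').mp hr'
    · by_cases hru : (MFG T).Reachable x u
      · obtain ⟨y, ⟨hyr, hys⟩, hyu⟩ := hQ x
        have hyeqv : y = v := hyu v ⟨hru.trans hRG, hvs⟩ ▸ rfl
        refine ⟨u, ⟨(hR2 x u hx huv).mpr hru, Finset.notMem_erase _ _⟩, ?_⟩
        rintro y' ⟨hr', hs'⟩
        have hy'v : y' ≠ v := by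
          intro hh
          subst hh
          exact hx ((hR1 x).mp hr'.symm)
        by_contra hy'u
        have hy's : y' ∉ s := fun hmem =>
          hs' (Finset.mem_erase.mpr ⟨hy'u, hmem⟩)
        have := hyu y' ⟨(hR2 x y' hx hy'v).mp hr', hy's⟩
        rw [this] at hy'v
        exact hy'v hyeqv
      · obtain ⟨y, ⟨hyr, hys⟩, hyu⟩ := hQ x
        have hyv : y ≠ v := by
          intro hh
          subst hh
          exact hru (hyr.trans hRG.symm)
        have hyu' : y ≠ u := fun hh => (hh ▸ hys) hus
        refine ⟨y, ⟨(hR2 x y hx hyv).mpr hyr,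
          fun hh => hys (Finset.mem_of_mem_erase hh)⟩, ?_⟩
        rintro y' ⟨hr', hs'⟩
        have hy'v : y' ≠ v := by
          intro hh
          subst hh
          exact hx ((hR1 x).mp hr'.symm)
        have hry' : (MFG T).Reachable x y' := (hR2 x y' hx hy'v).mp hr'
        have hy'u : y' ≠ u := by
          intro hh
          subst hh
          exact hru hry'
        apply hyu
        exact ⟨hry', fun hmem => hs' (Finset.mem_erase.mpr ⟨hy'u, hmem⟩)⟩
  · intro hQ x
    by_cases hxv : (MFG T).Reachable x v
    · have hxu : (MFG T).Reachable x u := hxv.trans hRG.symm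
      refine ⟨v, ⟨hxv, hvs⟩, ?_⟩
      rintro y' ⟨hr', hs'⟩
      by_contra hy'v
      have hry' : (MFG (T.erase s(u, v))).Reachable u y' :=
        (hR2 u y' huv hy'v).mpr (hxu.symm.trans hr')
      obtain ⟨y₀, ⟨h0r, h0s⟩, h0u⟩ := hQ u
      have hu0 : u = y₀ := h0u u ⟨SimpleGraph.Reachable.refl _, Finset.notMem_erase _ _⟩
      have hy0 : y' = y₀ := h0u y' ⟨hry', fun hh => hs' (Finset.mem_of_mem_erase hh)⟩
      rw [← hu0] at hy0
      exact hs' (hy0 ▸ hus)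
    · have hx : x ≠ v := fun hh => hxv (hh ▸ SimpleGraph.Reachable.refl x)
      obtain ⟨y₀, ⟨h0r, h0s⟩, h0u⟩ := hQ x
      have h0v : y₀ ≠ v := by
        intro hh
        subst hh
        exact hx ((hR1 x).mp h0r.symm)
      have hr0 : (MFG T).Reachable x y₀ := (hR2 x y₀ hx h0v).mp h0r
      have h0uu : y₀ ≠ u := by
        intro hh
        subst hh
        exact hxv (hr0.trans hRG)
      refine ⟨y₀, ⟨hr0, fun hmem => h0s (Finset.mem_erase.mpr ⟨h0uu, hmem⟩)⟩, ?_⟩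
      rintro y' ⟨hr', hs'⟩
      have hy'v : y' ≠ v := fun hh => hxv (hh ▸ hr')
      apply h0u
      exact ⟨(hR2 x y' hx hy'v).mpr hr', fun hh => hs' (Finset.mem_of_mem_erase hh)⟩

lemma MF_QE3 {s : Finset (Fin n)} (huv : u ≠ v) (he0 : s(u, v) ∈ T)
    (hvs : v ∉ s) (hus : u ∉ s) : ¬ MFQ s T := by
  intro hQ
  obtain ⟨y, ⟨hyr, hys⟩, hyu⟩ := hQ v
  have h1 : u = y := hyu u ⟨(MF_RG huv he0).symm, hus⟩
  have h2 : v = y := hyu v ⟨SimpleGraph.Reachable.refl _, hvs⟩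
  exact huv (h1.trans h2.symm)


end Reach

lemma MF_PERPAIR : ∀ (T : Finset (Sym2 (Fin n))), T ⊆ MFES n → (MFG T).IsAcyclic →
    ∀ s : Finset (Fin n), s.card = T.card →
    MFgram s T = if MFQ s T then 1 else 0 := by
  classical
  intro T
  induction T using Finset.strongInduction with
  | _ T ih =>
    intro hTE hac s hs
    rcases Finset.eq_empty_or_nonempty T with rfl | hne
    · have hs0 : s = ∅ := Finset.card_eq_zero.mp (by simpa using hs)
      subst hs0
      have hgram : MFgram (∅ : Finset (Fin n)) (∅ : Finset (Sym2 (Fin n))) = 1 := by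
        rw [MFgram]
        haveI : IsEmpty ↥(∅ : Finset (Sym2 (Fin n))) :=
          Finset.isEmpty_coe_sort.mpr rfl
        exact Matrix.det_isEmpty
      have hQ : MFQ (∅ : Finset (Fin n)) (∅ : Finset (Sym2 (Fin n))) := by
        intro x
        refine ⟨x, ⟨SimpleGraph.Reachable.refl _, Finset.notMem_empty _⟩, ?_⟩
        rintro y ⟨hr, _⟩
        refine MF_isolated ?_ hr
        intro z hadj
        rw [MF_adj] at hadj
        exact absurd hadj.1 (Finset.notMem_empty _)
      rw [hgram, if_pos hQ]
    · obtain ⟨u, v, huv, he0, hleaf⟩ := MF_leaf hTE hac hne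
      have hsub : T.erase s(u, v) ⊂ T := Finset.erase_ssubset he0
      have hT'E : T.erase s(u, v) ⊆ MFES n := (Finset.erase_subset _ _).trans hTE
      have hac' : (MFG (T.erase s(u, v))).IsAcyclic := by
        intro x c hc
        exact hac (c.mapLe (MF_mono (Finset.erase_subset _ _)))
          ((SimpleGraph.Walk.mapLe_isCycle (MF_mono (Finset.erase_subset _ _))).mpr hc)
      have hcard' : (T.erase s(u, v)).card = T.card - 1 := Finset.card_erase_of_mem he0
      have hTpos : 1 ≤ T.card := Finset.card_pos.mpr hne
      by_cases hvs : v ∈ s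
      · rw [MF_E1 hTE huv he0 hleaf hvs hs,
          ih _ hsub hT'E hac' (s.erase v)
            (by rw [Finset.card_erase_of_mem hvs, hs, hcard'])]
        exact if_congr (MF_QE1 hTE huv he0 hleaf hvs).symm rfl rfl
      · by_cases hus : u ∈ s
        · rw [MF_E2 hTE huv he0 hvs hus hs,
            ih _ hsub hT'E hac' (s.erase u)
              (by rw [Finset.card_erase_of_mem hus, hs, hcard'])]
          exact if_congr (MF_QE2 hTE huv he0 hleaf hvs hus).symm rfl rfl
        · rw [MF_E3 he0 hvs hus hs, if_neg (MF_QE3 huv he0 hvs hus)]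


section Count

variable {T : Finset (Sym2 (Fin n))}

lemma MF_Qmiss {s : Finset (Fin n)} (hQ : MFQ s T) (K : (MFG T).ConnectedComponent) :
    ∃! y : Fin n, (MFG T).connectedComponentMk y = K ∧ y ∉ s := by
  obtain ⟨x, rfl⟩ := K.exists_rep
  obtain ⟨y, ⟨hyr, hys⟩, hyu⟩ := hQ x
  refine ⟨y, ⟨SimpleGraph.ConnectedComponent.eq.mpr hyr.symm, hys⟩, ?_⟩
  rintro y' ⟨hk', hs'⟩
  exact hyu y' ⟨(SimpleGraph.ConnectedComponent.eq.mp hk').symm, hs'⟩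

lemma MF_walk_induce {G : SimpleGraph (Fin n)} {S : Set (Fin n)} {a b : Fin n}
    (p : G.Walk a b) :
    (∀ x ∈ p.support, x ∈ S) →
    ∀ (ha : a ∈ S) (hb : b ∈ S), (G.induce S).Reachable ⟨a, ha⟩ ⟨b, hb⟩ := by
  induction p with
  | nil =>
    intro _ ha hb
    exact SimpleGraph.Reachable.refl _
  | @cons a z b h q ih =>
    intro hsup ha hb
    have hz : z ∈ S := hsup z (by simp [SimpleGraph.Walk.support_cons])
    have h1 : (G.induce S).Adj ⟨a, ha⟩ ⟨z, hz⟩ := h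
    exact h1.reachable.trans
      (ih (fun x hx => hsup x (by rw [SimpleGraph.Walk.support_cons]; exact List.mem_cons_of_mem _ hx)) hz hb)

lemma MF_tree (hTE : T ⊆ MFES n) (hac : (MFG T).IsAcyclic)
    (K : (MFG T).ConnectedComponent) :
    (T.filter fun e => ∀ x ∈ e, x ∈ K.supp).card + 1
      = (Finset.univ.filter (fun x : Fin n => x ∈ K.supp)).card := by
  classical
  set H := (MFG T).induce K.supp with hH
  obtain ⟨x0, hx0⟩ := K.exists_rep
  have hx0m : x0 ∈ K.supp := by rw [SimpleGraph.ConnectedComponent.mem_supp_iff]; exact hx0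
  have hconn : H.Connected := by
    rw [SimpleGraph.connected_iff]
    constructor
    · rintro ⟨a, ha⟩ ⟨b, hb⟩
      have ha' := (SimpleGraph.ConnectedComponent.mem_supp_iff _ _).mp ha
      have hb' := (SimpleGraph.ConnectedComponent.mem_supp_iff _ _).mp hb
      have hr : (MFG T).Reachable a b :=
        SimpleGraph.ConnectedComponent.eq.mp (ha'.trans hb'.symm)
      obtain ⟨p⟩ := hr
      refine MF_walk_induce p ?_ ha hb
      intro x hx
      rw [SimpleGraph.ConnectedComponent.mem_supp_iff, ← ha']
      apply SimpleGraph.ConnectedComponent.eq.mpr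
      exact ⟨(p.takeUntil x hx).reverse⟩
    · exact ⟨⟨x0, hx0m⟩⟩
  have hacH : H.IsAcyclic := by
    intro x c hc
    exact hac _ (SimpleGraph.Walk.IsCycle.map
      (f := (SimpleGraph.Embedding.induce K.supp).toHom) Subtype.val_injective hc)
  have htree : H.IsTree := ⟨hconn, hacH⟩
  have hcard := htree.card_edgeFinset
  have hedge : H.edgeFinset.card = (T.filter fun e => ∀ x ∈ e, x ∈ K.supp).card := by
    refine Finset.card_bij (fun e' _ => Sym2.map Subtype.val e') ?_ ?_ ?_
    · intro e' he'
      rw [SimpleGraph.mem_edgeFinset] at he'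
      rw [Finset.mem_filter]
      constructor
      · induction e' using Sym2.inductionOn with
        | hf a b =>
          rw [SimpleGraph.mem_edgeSet] at he'
          have hGadj : (MFG T).Adj a.1 b.1 := he'
          rw [MF_adj] at hGadj
          show Sym2.map Subtype.val s(a, b) ∈ T
          rw [Sym2.map_pair_eq]
          exact hGadj.1
      · intro x hx
        rw [Sym2.mem_map] at hx
        obtain ⟨y, _, rfl⟩ := hx
        exact y.2
    · intro e1 h1 e2 h2 he
      exact Sym2.map.injective Subtype.val_injective he
    · intro e he
      rw [Finset.mem_filter] at he
      obtain ⟨heT, hall⟩ := he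
      have hnd : ¬ e.IsDiag := MF_nondiag hTE heT
      have ha : MFfst e ∈ K.supp := hall _ (MFfst_mem e)
      have hb : MFsnd e ∈ K.supp := hall _ (MFsnd_mem e)
      refine ⟨s(⟨MFfst e, ha⟩, ⟨MFsnd e, hb⟩), ?_, ?_⟩
      · rw [SimpleGraph.mem_edgeFinset, SimpleGraph.mem_edgeSet]
        show (MFG T).Adj (MFfst e) (MFsnd e)
        rw [MF_adj]
        exact ⟨by rw [← MF_eq_mk]; exact heT, ne_of_lt (MFfst_lt hnd)⟩
      · show Sym2.map Subtype.val s(⟨MFfst e, ha⟩, ⟨MFsnd e, hb⟩) = e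
        rw [Sym2.map_pair_eq]
        exact (MF_eq_mk e).symm
  have hvert : Fintype.card ↥(K.supp) =
      (Finset.univ.filter (fun x : Fin n => x ∈ K.supp)).card := by
    rw [Fintype.card_subtype]
  rw [← hedge, hcard]
  exact hvert

lemma MF_vpart :
    ∑ K : (MFG T).ConnectedComponent,
        (Finset.univ.filter (fun x : Fin n => x ∈ K.supp)).card = n := by
  classical
  have h1 := Finset.card_eq_sum_card_fiberwise
    (f := fun x : Fin n => (MFG T).connectedComponentMk x)
    (s := Finset.univ) (t := Finset.univ) (fun x _ => Finset.mem_univ _)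
  rw [Finset.card_univ, Fintype.card_fin] at h1
  conv_rhs => rw [h1]
  refine Finset.sum_congr rfl fun K _ => ?_
  congr 1
  apply Finset.filter_congr
  intro x _
  rw [SimpleGraph.ConnectedComponent.mem_supp_iff]

lemma MF_epart (hTE : T ⊆ MFES n) :
    ∑ K : (MFG T).ConnectedComponent,
        (T.filter fun e => ∀ x ∈ e, x ∈ K.supp).card = T.card := by
  classical
  have h1 := Finset.card_eq_sum_card_fiberwise
    (f := fun e : Sym2 (Fin n) => (MFG T).connectedComponentMk (MFfst e))
    (s := T) (t := Finset.univ) (fun x _ => Finset.mem_univ _)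
  rw [h1]
  refine Finset.sum_congr rfl fun K _ => ?_
  congr 1
  apply Finset.filter_congr
  intro e he
  have hnd : ¬ e.IsDiag := MF_nondiag hTE he
  have hadj : (MFG T).Adj (MFfst e) (MFsnd e) := by
    rw [MF_adj]
    exact ⟨by rw [← MF_eq_mk]; exact he, ne_of_lt (MFfst_lt hnd)⟩
  constructor
  · intro hall
    exact (SimpleGraph.ConnectedComponent.mem_supp_iff _ _).mp (hall _ (MFfst_mem e))
  · intro hK x hx
    rcases MF_mem_iff.mp hx with rfl | rfl
    · exact (SimpleGraph.ConnectedComponent.mem_supp_iff _ _).mpr hK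
    · refine (SimpleGraph.ConnectedComponent.mem_supp_iff _ _).mpr ?_
      rw [← hK]
      exact SimpleGraph.ConnectedComponent.eq.mpr hadj.symm.reachable

end Count

lemma MF_card_comp {T : Finset (Sym2 (Fin n))} (hTE : T ⊆ MFES n)
    (hac : (MFG T).IsAcyclic) :
    T.card + Fintype.card (MFG T).ConnectedComponent = n := by
  classical
  have h1 : ∑ K : (MFG T).ConnectedComponent,
      ((T.filter fun e => ∀ x ∈ e, x ∈ K.supp).card + 1)
      = ∑ K : (MFG T).ConnectedComponent,
        (Finset.univ.filter (fun x : Fin n => x ∈ K.supp)).card :=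
    Finset.sum_congr rfl fun K _ => MF_tree hTE hac K
  rw [Finset.sum_add_distrib, MF_epart hTE, Finset.sum_const, smul_eq_mul, mul_one,
    Finset.card_univ, MF_vpart] at h1
  exact h1

lemma MF_COUNT {T : Finset (Sym2 (Fin n))} (hTE : T ⊆ MFES n)
    (hac : (MFG T).IsAcyclic) :
    (((Finset.powersetCard T.card (Finset.univ : Finset (Fin n))).filter
        (fun s => MFQ s T)).card : ℝ)
      = ∏ K : (MFG T).ConnectedComponent,
          (((T.filter fun e => ∀ x ∈ e, x ∈ K.supp).card + 1 : ℕ) : ℝ) := by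
  classical
  have hkey : ((Finset.powersetCard T.card (Finset.univ : Finset (Fin n))).filter
        (fun s => MFQ s T)).card
      = ∏ K : (MFG T).ConnectedComponent,
          (Finset.univ.filter (fun x : Fin n => x ∈ K.supp)).card := by
    rw [show (∏ K : (MFG T).ConnectedComponent,
          (Finset.univ.filter (fun x : Fin n => x ∈ K.supp)).card)
        = ((Finset.univ : Finset (MFG T).ConnectedComponent).pi
            (fun K => Finset.univ.filter (fun x : Fin n => x ∈ K.supp))).card
      from (Finset.card_pi _ _).symm]
    refine Finset.card_bij
      (fun s hs => fun K _ =>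
        (MF_Qmiss (Finset.mem_filter.mp hs).2 K).choose) ?_ ?_ ?_
    · intro s hs
      rw [Finset.mem_pi]
      intro K hK
      rw [Finset.mem_filter]
      refine ⟨Finset.mem_univ _, ?_⟩
      rw [SimpleGraph.ConnectedComponent.mem_supp_iff]
      exact (MF_Qmiss (Finset.mem_filter.mp hs).2 K).choose_spec.1.1
    · intro s1 h1 s2 h2 heq
      have hgen : ∀ (s : Finset (Fin n)) (hs : s ∈ (Finset.powersetCard T.card
          (Finset.univ : Finset (Fin n))).filter (fun s => MFQ s T)) (y : Fin n),
          y ∈ s ↔ y ≠ (MF_Qmiss (Finset.mem_filter.mp hs).2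
            ((MFG T).connectedComponentMk y)).choose := by
        intro s hs y
        set hQ := (Finset.mem_filter.mp hs).2
        constructor
        · intro hy hh
          have := (MF_Qmiss hQ ((MFG T).connectedComponentMk y)).choose_spec.1.2
          rw [← hh] at this
          exact this hy
        · intro hh
          by_contra hy
          exact hh ((MF_Qmiss hQ ((MFG T).connectedComponentMk y)).choose_spec.2 y ⟨rfl, hy⟩)
      ext y
      rw [hgen s1 h1 y, hgen s2 h2 y]
      have h5 : (MF_Qmiss (Finset.mem_filter.mp h1).2 ((MFG T).connectedComponentMk y)).choose
          = (MF_Qmiss (Finset.mem_filter.mp h2).2 ((MFG T).connectedComponentMk y)).choose :=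
        congrFun (congrFun heq ((MFG T).connectedComponentMk y)) (Finset.mem_univ _)
      rw [h5]
    · intro f hf
      rw [Finset.mem_pi] at hf
      set g : (MFG T).ConnectedComponent → Fin n := fun K => f K (Finset.mem_univ K) with hg
      have hgK : ∀ K, (MFG T).connectedComponentMk (g K) = K := by
        intro K
        have := hf K (Finset.mem_univ K)
        rw [Finset.mem_filter, SimpleGraph.ConnectedComponent.mem_supp_iff] at this
        exact this.2
      set s : Finset (Fin n) := Finset.univ.filter
        (fun y : Fin n => y ≠ g ((MFG T).connectedComponentMk y)) with hsdef
      have hginj : Function.Injective g := by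
        intro K1 K2 hKK
        rw [← hgK K1, ← hgK K2, hKK]
      have hfixcard : (Finset.univ.filter
          (fun y : Fin n => y = g ((MFG T).connectedComponentMk y))).card
          = Fintype.card (MFG T).ConnectedComponent := by
        rw [← Finset.card_univ]
        refine (Finset.card_bij (fun K _ => g K) ?_ ?_ ?_).symm
        · intro K _
          rw [Finset.mem_filter]
          exact ⟨Finset.mem_univ _, by rw [hgK K]⟩
        · intro K1 _ K2 _ h
          exact hginj h
        · intro y hy
          rw [Finset.mem_filter] at hy
          exact ⟨(MFG T).connectedComponentMk y, Finset.mem_univ _, hy.2.symm⟩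
      have hscard : s.card = T.card := by
        have hsplit := Finset.card_filter_add_card_filter_not
          (s := (Finset.univ : Finset (Fin n)))
          (p := fun y : Fin n => y = g ((MFG T).connectedComponentMk y))
        rw [Finset.card_univ, Fintype.card_fin, hfixcard] at hsplit
        have hcc := MF_card_comp hTE hac
        have hs2 : s.card = (Finset.univ.filter
            (fun y : Fin n => ¬ y = g ((MFG T).connectedComponentMk y))).card := by
          rw [hsdef]
        omega
      have hQs : MFQ s T := by
        intro x
        refine ⟨g ((MFG T).connectedComponentMk x), ⟨?_, ?_⟩, ?_⟩
        · exact SimpleGraph.ConnectedComponent.eq.mp (hgK _).symm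
        · rw [hsdef, Finset.mem_filter]
          push_neg
          intro _
          rw [hgK _]
        · rintro y' ⟨hr', hs'⟩
          rw [hsdef, Finset.mem_filter] at hs'
          push_neg at hs'
          have h3 := hs' (Finset.mem_univ _)
          rw [h3]
          have h4 : (MFG T).connectedComponentMk y' = (MFG T).connectedComponentMk x :=
            SimpleGraph.ConnectedComponent.eq.mpr hr'.symm
          rw [h4]
      have hmem : s ∈ (Finset.powersetCard T.card
          (Finset.univ : Finset (Fin n))).filter (fun s => MFQ s T) := by
        rw [Finset.mem_filter, Finset.mem_powersetCard]
        exact ⟨⟨Finset.subset_univ _, hscard⟩, hQs⟩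
      refine ⟨s, hmem, ?_⟩
      funext K hK
      show (MF_Qmiss (Finset.mem_filter.mp hmem).2 K).choose = f K hK
      have hns : g K ∉ s := by
        rw [hsdef, Finset.mem_filter]
        push_neg
        intro _
        rw [hgK K]
      exact ((MF_Qmiss (Finset.mem_filter.mp hmem).2 K).choose_spec.2 (g K)
        ⟨hgK K, hns⟩).symm
  rw [hkey]
  rw [Nat.cast_prod]
  refine Finset.prod_congr rfl fun K _ => ?_
  rw [MF_tree hTE hac K]


theorem matrix_forest_A (n k : ℕ) (hn : 1 ≤ n) (hk : k ≤ n)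
    (c : Fin n → Fin n → ℝ) (hsym : ∀ p q, c p q = c q p) (hpos : ∀ p q, 0 ≤ c p q)
    (M : Matrix (Fin n) (Fin n) ℝ)
    (hM : M = ∑ p : Fin n, ∑ q : Fin n, if p < q then
        c p q • ((1 : Matrix (Fin n) (Fin n) ℝ)
          - Matrix.of fun i j => if j = Equiv.swap p q i then (1 : ℝ) else 0)
      else 0) :
    (∑ s : Finset (Fin n), if h : s.card = k then
        (M.submatrix (fun i => (s.orderIsoOfFin h i : Fin n))
          (fun i => (s.orderIsoOfFin h i : Fin n))).det
      else 0)
      = (∑ F : Finset (Sym2 (Fin n)),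
          if (∀ e ∈ F, ¬ e.IsDiag) ∧ F.card = k ∧
              (SimpleGraph.fromEdgeSet (↑F : Set (Sym2 (Fin n)))).IsAcyclic then
            (∏ e ∈ F, Sym2.lift ⟨c, hsym⟩ e) *
              ∏ comp : (SimpleGraph.fromEdgeSet (↑F : Set (Sym2 (Fin n)))).ConnectedComponent,
                (((F.filter fun e => ∀ v ∈ e, v ∈ comp.supp).card + 1 : ℕ) : ℝ)
          else 0)
    ∧ M.det = 0 := by
  classical
  have hM' : ∀ x y, M x y = ∑ e ∈ MFES n, Sym2.lift ⟨c, hsym⟩ e * (MFw e x * MFw e y) :=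
    MF_LAP c hsym M hM
  -- the determinant vanishes
  have hdet0 : M.det = 0 := by
    rw [← Matrix.exists_mulVec_eq_zero_iff]
    refine ⟨fun _ => (1 : ℝ), ?_, ?_⟩
    · intro h
      have := congrFun h ⟨0, hn⟩
      simpa using this
    · funext x
      show ∑ y : Fin n, M x y * 1 = 0
      have h1 : ∀ y, M x y * 1 = ∑ e ∈ MFES n, Sym2.lift ⟨c, hsym⟩ e * (MFw e x * MFw e y) := by
        intro y
        rw [mul_one, hM' x y]
      rw [Finset.sum_congr rfl fun y _ => h1 y, Finset.sum_comm]
      refine Finset.sum_eq_zero fun e _ => ?_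
      have h2 : ∑ y : Fin n, Sym2.lift ⟨c, hsym⟩ e * (MFw e x * MFw e y)
          = Sym2.lift ⟨c, hsym⟩ e * MFw e x * ∑ y : Fin n, MFw e y := by
        rw [Finset.mul_sum]
        refine Finset.sum_congr rfl fun y _ => ?_
        ring
      rw [h2]
      have h3 : ∑ y : Fin n, MFw e y = 0 := by
        simp [MFw, Finset.sum_sub_distrib]
      rw [h3, mul_zero]
  refine ⟨?_, hdet0⟩
  -- Step 1 : rewrite the left side as a sum over k-subsets
  have hstep : ∀ s : Finset (Fin n),
      (if h : s.card = k then
        (M.submatrix (fun i => (s.orderIsoOfFin h i : Fin n))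
          (fun i => (s.orderIsoOfFin h i : Fin n))).det
      else 0)
      = if s.card = k then
          (M.submatrix (fun i : ↥s => (↑i : Fin n)) (fun i : ↥s => (↑i : Fin n))).det
        else 0 := by
    intro s
    by_cases h : s.card = k
    · rw [dif_pos h, if_pos h]
      exact Matrix.det_submatrix_equiv_self (s.orderIsoOfFin h).toEquiv
        (M.submatrix (fun i : ↥s => (↑i : Fin n)) (fun i : ↥s => (↑i : Fin n)))
    · rw [dif_neg h, if_neg h]
  rw [Finset.sum_congr rfl (fun s _ => hstep s), ← Finset.sum_filter]
  have hps : (Finset.univ : Finset (Finset (Fin n))).filter (fun s => s.card = k)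
      = Finset.powersetCard k (Finset.univ : Finset (Fin n)) := by
    ext s
    simp [Finset.mem_powersetCard]
  rw [hps]
  -- Step 2 : Cauchy-Binet
  rw [Finset.sum_congr rfl (fun s hs =>
    MF_CB c hsym M hM' s (Finset.mem_powersetCard.mp hs).2)]
  rw [Finset.sum_comm]
  -- Step 3 : evaluate the inner sums
  have hPT : ∀ T ∈ Finset.powersetCard k (MFES n),
      (∑ s ∈ Finset.powersetCard k (Finset.univ : Finset (Fin n)),
        (∏ e ∈ T, Sym2.lift ⟨c, hsym⟩ e) * MFgram s T)
      = if (MFG T).IsAcyclic then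
          (∏ e ∈ T, Sym2.lift ⟨c, hsym⟩ e) *
            ∏ K : (MFG T).ConnectedComponent,
              (((T.filter fun e => ∀ x ∈ e, x ∈ K.supp).card + 1 : ℕ) : ℝ)
        else 0 := by
    intro T hT
    obtain ⟨hTE, hTk⟩ := Finset.mem_powersetCard.mp hT
    rw [← Finset.mul_sum]
    by_cases hac : (MFG T).IsAcyclic
    · rw [if_pos hac]
      congr 1
      have h4 : ∀ s ∈ Finset.powersetCard k (Finset.univ : Finset (Fin n)),
          MFgram s T = if MFQ s T then (1 : ℝ) else 0 := by
        intro s hs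
        exact MF_PERPAIR T hTE hac s
          ((Finset.mem_powersetCard.mp hs).2.trans hTk.symm)
      rw [Finset.sum_congr rfl h4, Finset.sum_boole, ← hTk, MF_COUNT hTE hac]
    · rw [if_neg hac]
      have h5 : ∀ s ∈ Finset.powersetCard k (Finset.univ : Finset (Fin n)),
          MFgram s T = 0 := fun s _ => MF_CYC hac s
      rw [Finset.sum_congr rfl h5, Finset.sum_const_zero, mul_zero]
  rw [Finset.sum_congr rfl hPT]
  -- Step 4 : match with the right-hand side
  have hR : ∀ F : Finset (Sym2 (Fin n)),
      (if (∀ e ∈ F, ¬ e.IsDiag) ∧ F.card = k ∧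
          (SimpleGraph.fromEdgeSet (↑F : Set (Sym2 (Fin n)))).IsAcyclic then
        (∏ e ∈ F, Sym2.lift ⟨c, hsym⟩ e) *
          ∏ comp : (SimpleGraph.fromEdgeSet (↑F : Set (Sym2 (Fin n)))).ConnectedComponent,
            (((F.filter fun e => ∀ v ∈ e, v ∈ comp.supp).card + 1 : ℕ) : ℝ)
      else 0)
      = if F ∈ Finset.powersetCard k (MFES n) then
          (if (MFG F).IsAcyclic then
            (∏ e ∈ F, Sym2.lift ⟨c, hsym⟩ e) *
              ∏ K : (MFG F).ConnectedComponent,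
                (((F.filter fun e => ∀ x ∈ e, x ∈ K.supp).card + 1 : ℕ) : ℝ)
          else 0)
        else 0 := by
    intro F
    have hmem : F ∈ Finset.powersetCard k (MFES n) ↔ ((∀ e ∈ F, ¬ e.IsDiag) ∧ F.card = k) := by
      rw [Finset.mem_powersetCard]
      constructor
      · rintro ⟨h1, h2⟩
        exact ⟨fun e he => MF_nondiag h1 he, h2⟩
      · rintro ⟨h1, h2⟩
        refine ⟨?_, h2⟩
        intro e he
        simp only [MFES, Finset.mem_filter]
        exact ⟨Finset.mem_univ _, h1 e he⟩
    by_cases h1 : (∀ e ∈ F, ¬ e.IsDiag) ∧ F.card = k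
    · rw [if_pos (hmem.mpr h1)]
      by_cases h2 : (MFG F).IsAcyclic
      · rw [if_pos ⟨h1.1, h1.2, h2⟩, if_pos h2]
        congr! 3
        rename_i a b hab
        rw [Nat.cast_inj, Nat.add_right_cancel_iff]
        apply congrArg Finset.card
        ext e
        rw [Finset.mem_filter, Finset.mem_filter]
        have hab2 : a = b := eq_of_heq hab
        subst hab2
        exact Iff.rfl
      · rw [if_neg (by
          rintro ⟨_, _, h3⟩
          exact h2 h3), if_neg h2]
    · rw [if_neg (fun hh => h1 ⟨hh.1, hh.2.1⟩), if_neg (fun hh => h1 (hmem.mp hh))]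
  rw [Finset.sum_congr rfl (fun F _ => hR F)]
  rw [Finset.sum_ite_mem, Finset.univ_inter]

end MF
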